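/- Let K be a UFD of characteristic p > 0, let A = K[x_1,…,x_n] be the polynomial algebra, let f_1,…,f_m ∈ A, and let Q be a prime ideal of A. Then the ideal ijac(f_1,…,f_m) generated by all m×m jacobian minors of f_1,…,f_m is contained in Q if and only if there exists an index i ∈ {1,…,m} for which the following condition (∗) holds: there exist s_1,…,s_m ∈ A with s_i ∉ Q such that s_1·d(f_1) + … + s_m·d(f_m) ∈ Q for every K-derivation d of A. -/

import Mathlib

open MvPolynomial

/-- The monomial `f₁^{α₁} ⋯ f_m^{α_m}` for a multi-index `α ∈ Ω_m` (all exponents `< p`). -/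
def pMonomial {S : Type*} [CommRing S] {m p : ℕ} (f : Fin m → S) (α : Fin m → Fin p) : S :=
  ∏ i, f i ^ (α i : ℕ)

/-- `f₁, …, f_m` are `p`-independent over the subring `B`. -/
def pIndependent {S : Type*} [CommRing S] (B : Subring S) {m : ℕ} (p : ℕ) (f : Fin m → S) : Prop :=
  ∀ b : (Fin m → Fin p) → S, (∀ α, b α ∈ B) →
    ∑ α : Fin m → Fin p, b α * pMonomial f α = 0 → ∀ α, b α = 0

/-- `f₁, …, f_m` form a `p`-basis of `R` over `B`. -/
def IsPBasis {S : Type*} [CommRing S] (B : Subring S) (R : Set S) {m : ℕ} (p : ℕ)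
    (f : Fin m → S) : Prop :=
  (↑B ⊆ R) ∧ (∀ α : Fin m → Fin p, pMonomial f α ∈ R) ∧ pIndependent B p f ∧
    ∀ r ∈ R, ∃ b : (Fin m → Fin p) → S, (∀ α, b α ∈ B) ∧
      r = ∑ α : Fin m → Fin p, b α * pMonomial f α

/-- The jacobian determinant of `f₁,…,f_m` w.r.t. the variables `x_{j₁},…,x_{j_m}`. -/
noncomputable def jacMinor {K : Type*} [CommRing K] {n m : ℕ} (f : Fin m → MvPolynomial (Fin n) K)
    (j : Fin m → Fin n) : MvPolynomial (Fin n) K :=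
  (Matrix.of fun i l => pderiv (j l) (f i)).det

/-- The subring `B = K[x₁^p, …, x_n^p]` of `K[x₁,…,x_n]`. -/
noncomputable def pPowers (K : Type*) [CommRing K] (n p : ℕ) : Subring (MvPolynomial (Fin n) K) :=
  (Algebra.adjoin K (Set.range fun i : Fin n => (X i : MvPolynomial (Fin n) K) ^ p)).toSubring

/-- `R_i = B[f₁,…,f̂ᵢ,…,f_m]`. -/
noncomputable def Ri (K : Type*) [CommRing K] {n m : ℕ} (p : ℕ) (f : Fin m → MvPolynomial (Fin n) K)
    (i : Fin m) : Subring (MvPolynomial (Fin n) K) :=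
  Subring.closure (↑(pPowers K n p) ∪ (f '' {j | j ≠ i}))

/-- `R_{ij} = B[f₁,…,f̂ᵢ,…,f̂ⱼ,…,f_m]`. -/
noncomputable def Rij (K : Type*) [CommRing K] {n m : ℕ} (p : ℕ) (f : Fin m → MvPolynomial (Fin n) K)
    (i j : Fin m) : Subring (MvPolynomial (Fin n) K) :=
  Subring.closure (↑(pPowers K n p) ∪ (f '' {l | l ≠ i ∧ l ≠ j}))

/-- An element is `B`-free if it has no noninvertible factor from `B`. -/
def BFree {S : Type*} [CommRing S] (B : Subring S) (a : S) : Prop :=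
  ∀ b ∈ B, b ∣ a → IsUnit b

/-- `C_B(f₁,…,f_m) = B₀(f₁,…,f_m) ∩ A`: those elements of `A` lying in the field of
fractions of `B[f₁,…,f_m]`. -/
def CB {S : Type*} [CommRing S] (B : Subring S) {m : ℕ} (f : Fin m → S) : Set S :=
  {a | ∃ s t : S, s ∈ Subring.closure (↑B ∪ Set.range f) ∧
      t ∈ Subring.closure (↑B ∪ Set.range f) ∧ s ≠ 0 ∧ a * s = t}

/-- A `B`-derivation of `A`: additive, Leibniz rule, vanishing on `B`. -/
def IsBDerivation {S : Type*} [CommRing S] (B : Subring S) (d : S → S) : Prop :=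
  (∀ x y, d (x + y) = d x + d y) ∧ (∀ x y, d (x * y) = x * d y + y * d x) ∧ ∀ b ∈ B, d b = 0


open Matrix in
lemma exists_dep_of_minors_zero {F : Type*} [Field F] {m n : ℕ}
    (M : Matrix (Fin m) (Fin n) F)
    (h : ∀ j : Fin m → Fin n, (Matrix.of fun i l => M i (j l)).det = 0) :
    ∃ c : Fin m → F, c ≠ 0 ∧ ∀ jc : Fin n, ∑ i, c i * M i jc = 0 := by
  by_contra hc
  push_neg at hc
  have hli : LinearIndependent F (fun i => M i) := by
    rw [Fintype.linearIndependent_iff]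
    intro g hg
    by_contra hgz
    push_neg at hgz
    obtain ⟨i0, hi0⟩ := hgz
    have hgne : g ≠ 0 := fun hz => hi0 (by simp [hz])
    obtain ⟨jc, hjc⟩ := hc g hgne
    apply hjc
    have := congrFun hg jc
    simpa using this
  have hrank : M.rank = m := by
    have := hli.rank_matrix
    simpa using this
  have hspan : Submodule.span F (Set.range Mᵀ) = ⊤ := by
    apply Submodule.eq_top_of_finrank_eq
    rw [show Set.range Mᵀ = Set.range M.col from rfl, ← Matrix.rank_eq_finrank_span_cols, hrank]
    simp
  obtain ⟨b, hbsub, hbspan, hbli⟩ := exists_linearIndependent F (Set.range Mᵀ)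
  rw [hspan] at hbspan
  have hbasis : Module.Basis b F (Fin m → F) := Module.Basis.mk hbli (by rw [Subtype.range_coe, hbspan])
  have e : Fin m ≃ b := (hbasis.indexEquiv (Pi.basisFun F (Fin m))).symm
  choose j hj using fun l : Fin m => hbsub (e l).2
  have hcols : LinearIndependent F (fun l : Fin m => Mᵀ (j l)) := by
    have : (fun l : Fin m => Mᵀ (j l)) = (fun v : b => (v : Fin m → F)) ∘ e := by
      funext l; simp [hj l]
    rw [this]
    exact hbli.comp e e.injective
  have hunit : IsUnit (Matrix.of fun i l => M i (j l)) := by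
    rw [← Matrix.linearIndependent_cols_iff_isUnit]
    convert hcols using 1
    funext a b; rfl
  have hdet : IsUnit (Matrix.of fun i l => M i (j l)).det :=
    (Matrix.isUnit_iff_isUnit_det _).mp hunit
  exact hdet.ne_zero (h j)

set_option maxHeartbeats 1000000 in
lemma exists_dep_mod_prime {A : Type*} [CommRing A] {Q : Ideal A} (hQ : Q.IsPrime)
    {m n : ℕ} (g : Matrix (Fin m) (Fin n) A)
    (h : ∀ j : Fin m → Fin n, (Matrix.of fun i l => g i (j l)).det ∈ Q) :
    ∃ i0 : Fin m, ∃ s : Fin m → A, s i0 ∉ Q ∧ ∀ jx : Fin n, (∑ l, s l * g l jx) ∈ Q := by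
  classical
  haveI := hQ
  set R := A ⧸ Q with hR
  set F := FractionRing R with hF
  set ψ : A →+* R := Ideal.Quotient.mk Q with hψdef
  set φ : A →+* F := (algebraMap R F).comp ψ with hφdef
  set M : Matrix (Fin m) (Fin n) F := Matrix.of fun i jx => φ (g i jx) with hM
  have hminors : ∀ j : Fin m → Fin n, (Matrix.of fun i l => M i (j l)).det = 0 := by
    intro j
    have h0 : φ ((Matrix.of fun i l => g i (j l)).det) = 0 := by
      rw [hφdef, RingHom.comp_apply,
        show ψ ((Matrix.of fun i l => g i (j l)).det) = 0 from
          Ideal.Quotient.eq_zero_iff_mem.mpr (h j), map_zero]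
    rw [RingHom.map_det] at h0
    exact h0
  obtain ⟨c, hc0, hcol⟩ := exists_dep_of_minors_zero M hminors
  obtain ⟨bden, hb⟩ :=
    IsLocalization.exist_integer_multiples_of_finite (nonZeroDivisors R) c
  choose t ht using hb
  obtain ⟨i0, hci0⟩ := Function.ne_iff.mp hc0
  simp only [Pi.zero_apply] at hci0
  have hbne : algebraMap R F (bden : R) ≠ 0 := by
    intro hzz
    exact nonZeroDivisors.coe_ne_zero bden (IsFractionRing.injective R F (by simpa using hzz))
  have hti0 : t i0 ≠ 0 := by
    intro hz
    have h1 := ht i0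
    rw [hz, map_zero, Algebra.smul_def] at h1
    rcases mul_eq_zero.mp h1.symm with h2 | h2
    · exact hbne h2
    · exact hci0 h2
  choose s hs using fun i => Ideal.Quotient.mk_surjective (I := Q) (t i)
  refine ⟨i0, s, ?_, ?_⟩
  · intro hmem
    exact hti0 (by rw [← hs i0]; exact Ideal.Quotient.eq_zero_iff_mem.mpr hmem)
  · intro jx
    rw [← Ideal.Quotient.eq_zero_iff_mem]
    have hψ : ψ (∑ l, s l * g l jx) = ∑ l, t l * ψ (g l jx) := by
      rw [map_sum]
      exact Finset.sum_congr rfl fun l _ => by rw [map_mul, hs l]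
    have hz : algebraMap R F (∑ l, t l * ψ (g l jx)) = 0 := by
      rw [map_sum]
      have he : ∀ l : Fin m, algebraMap R F (t l * ψ (g l jx)) =
          algebraMap R F (bden : R) * (c l * M l jx) := by
        intro l
        rw [map_mul, ht l, Algebra.smul_def, mul_assoc]
        rfl
      rw [Finset.sum_congr rfl fun l _ => he l, ← Finset.mul_sum, hcol jx, mul_zero]
    apply IsFractionRing.injective R F
    rw [map_zero, hψ, hz]


lemma derivation_apply_eq_sum {K : Type*} [CommRing K] {n : ℕ}
    (d : Derivation K (MvPolynomial (Fin n) K) (MvPolynomial (Fin n) K))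
    (g : MvPolynomial (Fin n) K) :
    d g = ∑ jx : Fin n, d (X jx) * pderiv jx g := by
  have hsum : ∀ a : MvPolynomial (Fin n) K,
      (∑ jx : Fin n, d (X jx) • (pderiv jx : Derivation K (MvPolynomial (Fin n) K)
        (MvPolynomial (Fin n) K))) a = ∑ jx : Fin n, d (X jx) * pderiv jx a := by
    intro a
    have hco := map_sum (Derivation.coeFnAddMonoidHom :
        Derivation K (MvPolynomial (Fin n) K) (MvPolynomial (Fin n) K) →+ _)
      (fun jx : Fin n => d (X jx) • (pderiv jx : Derivation K (MvPolynomial (Fin n) K)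
        (MvPolynomial (Fin n) K))) Finset.univ
    have h2 : ∀ D : Derivation K (MvPolynomial (Fin n) K) (MvPolynomial (Fin n) K),
        Derivation.coeFnAddMonoidHom D = ⇑D := fun _ => rfl
    simp only [h2] at hco
    calc (∑ jx : Fin n, d (X jx) • (pderiv jx : Derivation K (MvPolynomial (Fin n) K)
          (MvPolynomial (Fin n) K))) a
        = (∑ jx : Fin n, ⇑(d (X jx) • (pderiv jx : Derivation K (MvPolynomial (Fin n) K)
          (MvPolynomial (Fin n) K)))) a := by rw [← hco]
      _ = ∑ jx : Fin n, d (X jx) * pderiv jx a := by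
          rw [Finset.sum_apply]
          exact Finset.sum_congr rfl fun jx _ => by
            rw [Derivation.smul_apply, smul_eq_mul]
  have hd : d = ∑ jx : Fin n, d (X jx) • (pderiv jx : Derivation K (MvPolynomial (Fin n) K)
      (MvPolynomial (Fin n) K)) := by
    apply MvPolynomial.derivation_ext
    intro i
    rw [hsum]
    rw [Finset.sum_eq_single i]
    · simp [pderiv_X_self]
    · intro jx _ hne
      rw [pderiv_X_of_ne (Ne.symm hne)]
      simp
    · simp
  conv_lhs => rw [hd]
  exact hsum g

/-- **Proposition 1 a).** The ideal `ijac(f₁,…,f_m)` generated by all `m×m` jacobian minors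
is contained in a prime ideal `Q` iff for some index `i` the condition `(∗)` holds: there
are `s₁,…,s_m ∈ A` with `sᵢ ∉ Q` and `s₁·d(f₁) + … + s_m·d(f_m) ∈ Q` for every
`K`-derivation `d` of `A`. -/
theorem ijac_le_prime_iff
    {K : Type*} [CommRing K] [IsDomain K] [UniqueFactorizationMonoid K]
    (p : ℕ) (hp : 0 < p) [CharP K p] {n m : ℕ}
    (f : Fin m → MvPolynomial (Fin n) K)
    (Q : Ideal (MvPolynomial (Fin n) K)) (hQ : Q.IsPrime) :
    Ideal.span (Set.range fun j : Fin m → Fin n => jacMinor f j) ≤ Q ↔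
      ∃ i : Fin m, ∃ s : Fin m → MvPolynomial (Fin n) K, s i ∉ Q ∧
        ∀ d : Derivation K (MvPolynomial (Fin n) K) (MvPolynomial (Fin n) K),
          (∑ l, s l * d (f l)) ∈ Q := by
  classical
  constructor
  · -- forward direction
    intro hle
    obtain ⟨i0, s, hsi, hkey⟩ := exists_dep_mod_prime hQ
      (Matrix.of fun i jx => pderiv jx (f i))
      (fun j => hle (Ideal.subset_span ⟨j, rfl⟩))
    refine ⟨i0, s, hsi, ?_⟩
    intro d
    have hrw : (∑ l, s l * d (f l)) =
        ∑ jx : Fin n, d (X jx) * ∑ l, s l * pderiv jx (f l) :=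
      calc (∑ l, s l * d (f l))
          = ∑ l, ∑ jx : Fin n, d (X jx) * (s l * pderiv jx (f l)) := by
            refine Finset.sum_congr rfl fun l _ => ?_
            rw [derivation_apply_eq_sum d (f l), Finset.mul_sum]
            exact Finset.sum_congr rfl fun jx _ => by ring
        _ = ∑ jx : Fin n, ∑ l, d (X jx) * (s l * pderiv jx (f l)) := Finset.sum_comm
        _ = ∑ jx : Fin n, d (X jx) * ∑ l, s l * pderiv jx (f l) := by
            exact Finset.sum_congr rfl fun jx _ => by rw [Finset.mul_sum]
    rw [hrw]
    exact Ideal.sum_mem _ fun jx _ => Q.mul_mem_left _ (hkey jx)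
  · -- reverse direction
    rintro ⟨i, s, hsi, hd⟩
    rw [Ideal.span_le]
    rintro _ ⟨j, rfl⟩
    have hk : ∀ k, (Matrix.of fun k l => pderiv (j k) (f l)).mulVec s k ∈ Q := by
      intro k
      have heq : (Matrix.of fun k l => pderiv (j k) (f l)).mulVec s k
          = ∑ l, s l * pderiv (j k) (f l) := by
        simp only [Matrix.mulVec, dotProduct, Matrix.of_apply]
        exact Finset.sum_congr rfl fun l _ => mul_comm _ _
      rw [heq]
      exact hd (pderiv (j k))
    have hdet : (Matrix.of fun k l => pderiv (j k) (f l)).det * s i ∈ Q := by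
      have h1 : ((Matrix.of fun k l => pderiv (j k) (f l)).adjugate.mulVec
          ((Matrix.of fun k l => pderiv (j k) (f l)).mulVec s)) i ∈ Q := by
        show (∑ l, (Matrix.of fun k l => pderiv (j k) (f l)).adjugate i l *
          ((Matrix.of fun k l => pderiv (j k) (f l)).mulVec s l)) ∈ Q
        exact Ideal.sum_mem _ fun l _ => Q.mul_mem_left _ (hk l)
      have h2 : (Matrix.of fun k l => pderiv (j k) (f l)).adjugate.mulVec
          ((Matrix.of fun k l => pderiv (j k) (f l)).mulVec s)
          = (Matrix.of fun k l => pderiv (j k) (f l)).det • s := by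
        rw [Matrix.mulVec_mulVec, Matrix.adjugate_mul, Matrix.smul_mulVec,
          Matrix.one_mulVec]
      rw [h2] at h1
      simpa using h1
    have hj : jacMinor f j = (Matrix.of fun k l => pderiv (j k) (f l)).det := by
      rw [jacMinor, ← Matrix.det_transpose]
      rfl
    show jacMinor f j ∈ Q
    rw [hj]
    exact (hQ.mem_or_mem hdet).resolve_right hsi
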